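/- In the affine nilTemperley-Lieb algebra on n generators, the elements \tilde{e}_r^n (sums of cyclically increasing monomials of length r) and \tilde{h}_r^n (sums of cyclically decreasing monomials of length r) satisfy \tilde{e}_i^n \cdot \tilde{h}_j^n = 0 whenever i + j > n. -/

import Mathlib

open scoped BigOperators

namespace NilTL

/-- The defining relations of the affine nilTemperley-Lieb algebra on `n` generators:
`aᵢ² = 0`, `aᵢaⱼ = aⱼaᵢ` when `i` and `j` are not cyclically adjacent mod `n`, and
`aᵢa_{i+1}aᵢ = a_{i+1}aᵢa_{i+1} = 0` (indices mod `n`). -/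
inductive TLRel (n : ℕ) [NeZero n] :
    FreeAlgebra ℤ (Fin n) → FreeAlgebra ℤ (Fin n) → Prop
  | sq (i : Fin n) : TLRel n (FreeAlgebra.ι ℤ i * FreeAlgebra.ι ℤ i) 0
  | comm (i j : Fin n) (h1 : i ≠ j + 1) (h2 : j ≠ i + 1) :
      TLRel n (FreeAlgebra.ι ℤ i * FreeAlgebra.ι ℤ j)
        (FreeAlgebra.ι ℤ j * FreeAlgebra.ι ℤ i)
  | braid1 (i : Fin n) :
      TLRel n (FreeAlgebra.ι ℤ i * FreeAlgebra.ι ℤ (i + 1) * FreeAlgebra.ι ℤ i) 0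
  | braid2 (i : Fin n) :
      TLRel n (FreeAlgebra.ι ℤ (i + 1) * FreeAlgebra.ι ℤ i * FreeAlgebra.ι ℤ (i + 1)) 0

/-- The affine nilTemperley-Lieb algebra `n\widehat{TL}ₙ`. -/
abbrev TL (n : ℕ) [NeZero n] := RingQuot (TLRel n)

/-- The generators `aᵢ` of the affine nilTemperley-Lieb algebra. -/
noncomputable def a (n : ℕ) [NeZero n] (i : Fin n) : TL n :=
  RingQuot.mkAlgHom ℤ (TLRel n) (FreeAlgebra.ι ℤ i)

/-- A canonical "gap" of a proper subset `S ⊊ ℤ/n`: an element of the complement. -/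
noncomputable def gap (n : ℕ) [NeZero n] (S : Finset (Fin n)) : Fin n :=
  if h : Sᶜ.Nonempty then Sᶜ.min' h else 0

/-- The cyclically decreasing word on a proper subset `S ⊊ ℤ/n`: list the elements of `S`
in the cyclically decreasing order `g - 1, g - 2, …, g + 1` starting just below a gap `g ∉ S`,
so that whenever `i` and `i+1` both occur in `S`, the letter `i+1` appears before `i`. -/
noncomputable def decWord (n : ℕ) [NeZero n] (S : Finset (Fin n)) : List (Fin n) :=
  ((List.range (n - 1)).map fun t => gap n S - 1 - (Fin.ofNat n t)).filter
    (fun x => decide (x ∈ S))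

/-- The cyclically increasing word on a proper subset `S ⊊ ℤ/n`. -/
noncomputable def incWord (n : ℕ) [NeZero n] (S : Finset (Fin n)) : List (Fin n) :=
  ((List.range (n - 1)).map fun t => gap n S + 1 + (Fin.ofNat n t)).filter
    (fun x => decide (x ∈ S))

/-- `h̃ᵣⁿ`, the sum of all cyclically decreasing monomials of length `r` (for `1 ≤ r ≤ n-1`,
these are indexed by the subsets of `ℤ/n` of size `r`). -/
noncomputable def hh (n : ℕ) [NeZero n] (r : ℕ) : TL n :=
  ∑ S ∈ Finset.powersetCard r (Finset.univ : Finset (Fin n)),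
    ((decWord n S).map (a n)).prod

/-- `ẽᵣⁿ`, the sum of all cyclically increasing monomials of length `r`. -/
noncomputable def ee (n : ℕ) [NeZero n] (r : ℕ) : TL n :=
  ∑ S ∈ Finset.powersetCard r (Finset.univ : Finset (Fin n)),
    ((incWord n S).map (a n)).prod

section Aux

open Fin.NatCast
open Fin.CommRing

variable (n : ℕ) [NeZero n]

lemma a_sq (i : Fin n) : a n i * a n i = 0 := by
  have := RingQuot.mkAlgHom_rel ℤ (TLRel.sq i)
  simpa [a, map_mul] using this

lemma a_comm {i j : Fin n} (h1 : i ≠ j + 1) (h2 : j ≠ i + 1) :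
    Commute (a n i) (a n j) := by
  have := RingQuot.mkAlgHom_rel ℤ (TLRel.comm i j h1 h2)
  simpa [a, map_mul, Commute, SemiconjBy] using this

lemma a_braid (i : Fin n) : a n i * a n (i + 1) * a n i = 0 := by
  have := RingQuot.mkAlgHom_rel ℤ (TLRel.braid1 i)
  simpa [a, map_mul] using this

lemma a_commute_offset (k : Fin n) (d : ℕ) (h1 : 2 ≤ d) (h2 : d ≤ n - 2) :
    Commute (a n k) (a n (k + (d : Fin n))) := by
  have hn : 4 ≤ n := by omega
  have hd : ((d : Fin n) : ℕ) = d := Fin.val_cast_of_lt (by omega)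
  apply a_comm
  · intro h
    have h'' : (d : Fin n) + 1 = 0 :=
      add_left_cancel (by rw [← add_assoc, ← h, add_zero] : k + ((d : Fin n) + 1) = k + 0)
    have h3 : ((d + 1 : ℕ) : Fin n) = 0 := by push_cast; exact h''
    have h4 : ((d + 1 : ℕ) : Fin n).val = d + 1 := Fin.val_cast_of_lt (by omega)
    rw [h3] at h4
    simp at h4
  · intro h
    have h' : ((d : Fin n)) = 1 := add_left_cancel (h : k + (d : Fin n) = k + 1)
    rw [h', Fin.val_one'] at hd
    rw [Nat.mod_eq_of_lt (by omega)] at hd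
    omega

lemma commute_prod (k : Fin n) (l : List ℕ) (h : ∀ d ∈ l, 2 ≤ d ∧ d ≤ n - 2) :
    Commute (a n k) ((l.map (fun d : ℕ => a n (k + (d : Fin n)))).prod) := by
  apply Commute.list_prod_right
  intro x hx
  obtain ⟨d, hd, rfl⟩ := List.mem_map.mp hx
  exact a_commute_offset n k d (h d hd).1 (h d hd).2

lemma commute_prod_rev (k : Fin n) (l : List ℕ) (h : ∀ d ∈ l, 2 ≤ d ∧ d ≤ n - 2) :
    Commute (a n k) (((l.map (fun d : ℕ => a n (k + (d : Fin n)))).reverse).prod) := by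
  rw [← List.map_reverse]
  exact commute_prod n k l.reverse (fun d hd => h d (List.mem_reverse.mp hd))

lemma comm_left {x y z : TL n} (h : Commute x y) : x * (y * z) = y * (x * z) := by
  rw [← mul_assoc, h.eq, mul_assoc]

lemma braid_block (k : Fin n) (x : TL n) : a n k * (a n (k + 1) * (a n k * x)) = 0 := by
  rw [← mul_assoc, ← mul_assoc, a_braid, zero_mul]

lemma braid_block' (k : Fin n) : a n k * (a n (k + 1) * a n k) = 0 := by
  rw [← mul_assoc]; exact a_braid n k

lemma key : ∀ (m : ℕ) (k : Fin n) (us vs : List ℕ),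
    us.length + vs.length ≤ m →
    us.Pairwise (· < ·) → vs.Pairwise (· < ·) →
    (∀ d ∈ us, 1 ≤ d ∧ d ≤ n - 2) → (∀ d ∈ vs, 1 ≤ d ∧ d ≤ n - 2) →
    (a n k * (us.map (fun d : ℕ => a n (k + (d : Fin n)))).prod) *
      (((vs.map (fun d : ℕ => a n (k + (d : Fin n)))).reverse).prod * a n k) = 0 := by
  intro m
  induction m with
  | zero =>
    intro k us vs hlen _ _ _ _
    have h1 : us = [] := List.length_eq_zero_iff.mp (by omega)
    have h2 : vs = [] := List.length_eq_zero_iff.mp (by omega)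
    subst h1; subst h2
    simpa using a_sq n k
  | succ m IH =>
    intro k us vs hlen hsu hsv hbu hbv
    match us with
    | [] =>
      by_cases hv1 : 1 ∈ vs
      · match vs with
        | [] => simp at hv1
        | e :: vs' =>
          have he : e = 1 := by
            rcases List.mem_cons.mp hv1 with h | h
            · exact h.symm
            · exact absurd ((List.pairwise_cons.mp hsv).1 1 h)
                (by have := (hbv e (List.mem_cons_self)).1; omega)
          subst he
          have hvs' : ∀ d ∈ vs', 2 ≤ d ∧ d ≤ n - 2 := fun d hd =>
            ⟨(List.pairwise_cons.mp hsv).1 d hd, (hbv d (List.mem_cons_of_mem _ hd)).2⟩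
          have hc := commute_prod_rev n k vs' hvs'
          simp only [List.map_cons, List.map_nil, List.reverse_cons, List.prod_append,
            List.prod_cons, List.prod_nil, mul_one, one_mul, Nat.cast_one]
          rw [mul_assoc, comm_left n hc, braid_block', mul_zero]
      · have hvs : ∀ d ∈ vs, 2 ≤ d ∧ d ≤ n - 2 := by
          intro d hd
          have hne : d ≠ 1 := fun h => hv1 (h ▸ hd)
          exact ⟨by have := (hbv d hd).1; omega, (hbv d hd).2⟩
        have hc := commute_prod_rev n k vs hvs
        simp only [List.map_nil, List.prod_nil, mul_one, one_mul]
        rw [comm_left n hc, a_sq, mul_zero]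
    | c :: us' =>
      by_cases hc1 : c = 1
      · subst hc1
        have hus' : ∀ d ∈ us', 2 ≤ d ∧ d ≤ n - 2 := fun d hd =>
          ⟨(List.pairwise_cons.mp hsu).1 d hd, (hbu d (List.mem_cons_of_mem _ hd)).2⟩
        by_cases hv1 : 1 ∈ vs
        · match vs with
          | [] => simp at hv1
          | e :: vs' =>
            have he : e = 1 := by
              rcases List.mem_cons.mp hv1 with h | h
              · exact h.symm
              · exact absurd ((List.pairwise_cons.mp hsv).1 1 h)
                  (by have := (hbv e (List.mem_cons_self)).1; omega)
            subst he
            have hvs' : ∀ d ∈ vs', 2 ≤ d ∧ d ≤ n - 2 := fun d hd =>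
              ⟨(List.pairwise_cons.mp hsv).1 d hd, (hbv d (List.mem_cons_of_mem _ hd)).2⟩
            have hshift : ∀ (l : List ℕ), (∀ d ∈ l, 2 ≤ d ∧ d ≤ n - 2) →
                l.map (fun d : ℕ => a n (k + (d : Fin n)))
                  = (l.map (· - 1)).map (fun d : ℕ => a n ((k + 1) + (d : Fin n))) := by
              intro l hb
              rw [List.map_map]
              apply List.map_congr_left
              intro d hd
              have h2 : 2 ≤ d := (hb d hd).1
              show a n (k + (d : Fin n)) = a n ((k + 1) + ((d - 1 : ℕ) : Fin n))
              congr 1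
              have hd' : d = 1 + (d - 1) := by omega
              rw [hd', Nat.cast_add, Nat.cast_one]
              have : 1 + (d - 1) - 1 = d - 1 := by omega
              rw [this]
              ring
            have hsort : ∀ (l : List ℕ), l.Pairwise (· < ·) → (∀ d ∈ l, 2 ≤ d ∧ d ≤ n - 2) →
                (l.map (· - 1)).Pairwise (· < ·) := by
              intro l hl hb
              rw [List.pairwise_map]
              exact hl.imp_of_mem (fun {x y} hx hy hxy => by
                have := (hb x hx).1; omega)
            have hIH := IH (k + 1) (us'.map (· - 1)) (vs'.map (· - 1))
              (by simp only [List.length_map, List.length_cons] at hlen ⊢; omega)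
              (hsort us' (List.pairwise_cons.mp hsu).2 hus')
              (hsort vs' (List.pairwise_cons.mp hsv).2 hvs')
              (by
                intro d hd
                obtain ⟨e', he', rfl⟩ := List.mem_map.mp hd
                have := hus' e' he'; omega)
              (by
                intro d hd
                obtain ⟨e', he', rfl⟩ := List.mem_map.mp hd
                have := hvs' e' he'; omega)
            rw [← hshift us' hus', ← hshift vs' hvs'] at hIH
            simp only [List.map_cons, List.reverse_cons, List.prod_append,
              List.prod_cons, List.prod_nil, mul_one, one_mul, Nat.cast_one]
            have h0 : (a n (k + 1) * (us'.map (fun d : ℕ => a n (k + (d : Fin n)))).prod) *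
                ((((vs'.map (fun d : ℕ => a n (k + (d : Fin n)))).reverse).prod * a n (k + 1)) *
                  a n k) = 0 := by
              rw [← mul_assoc, hIH, zero_mul]
            rw [mul_assoc, h0, mul_zero]
        · have hvs : ∀ d ∈ vs, 2 ≤ d ∧ d ≤ n - 2 := by
            intro d hd
            have hne : d ≠ 1 := fun h => hv1 (h ▸ hd)
            exact ⟨by have := (hbv d hd).1; omega, (hbv d hd).2⟩
          have hcQ := commute_prod_rev n k vs hvs
          have hcP := commute_prod n k us' hus'
          simp only [List.map_cons, List.prod_cons, Nat.cast_one]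
          rw [← hcQ.eq]
          simp only [mul_assoc]
          rw [comm_left n hcP.symm]
          exact braid_block n k _
      · have hus : ∀ d ∈ c :: us', 2 ≤ d ∧ d ≤ n - 2 := by
          intro d hd
          rcases List.mem_cons.mp hd with h | h
          · subst h
            exact ⟨by have := (hbu d (List.mem_cons_self)).1; omega,
              (hbu d (List.mem_cons_self)).2⟩
          · refine ⟨?_, (hbu d (List.mem_cons_of_mem _ h)).2⟩
            have h1 := (List.pairwise_cons.mp hsu).1 d h
            have h2 := (hbu c (List.mem_cons_self)).1
            omega
        have hcP := commute_prod n k (c :: us') hus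
        have hIH := IH k [] vs
          (by simp only [List.length_cons, List.length_nil] at hlen ⊢; omega)
          (by simp) hsv (by simp) hbv
        simp only [List.map_nil, List.prod_nil, mul_one, one_mul] at hIH
        rw [hcP.eq, mul_assoc, hIH, mul_zero]

lemma gap_not_mem (S : Finset (Fin n)) (hS : Sᶜ.Nonempty) : gap n S ∉ S := by
  unfold gap
  rw [dif_pos hS]
  simpa using Sᶜ.min'_mem hS

lemma map_range_reverse {α : Type*} (m : ℕ) (h : ℕ → α) :
    ((List.range m).map h).reverse = (List.range m).map (fun i => h (m - 1 - i)) := by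
  apply List.ext_getElem
  · simp
  · intro i h1 h2
    simp only [List.getElem_reverse, List.getElem_map, List.getElem_range,
      List.length_map, List.length_range]

lemma incWord_eq (S : Finset (Fin n)) :
    incWord n S = ((List.range (n - 1)).map (fun t : ℕ => gap n S + 1 + ((t : Fin n)))).filter
      (fun x => decide (x ∈ S)) := by
  unfold incWord
  congr 1

lemma decWord_eq (S : Finset (Fin n)) :
    decWord n S = ((List.range (n - 1)).map (fun t : ℕ => gap n S - 1 - ((t : Fin n)))).filter
      (fun x => decide (x ∈ S)) := by
  unfold decWord
  congr 1

lemma inc_split (S : Finset (Fin n)) (hS : Sᶜ.Nonempty) (k : Fin n) (hk : k ∈ S) :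
    ∃ (A : List (Fin n)) (us : List ℕ),
      incWord n S = A ++ k :: (us.map (fun d : ℕ => k + (d : Fin n))) ∧
      us.Pairwise (· < ·) ∧ (∀ d ∈ us, 1 ≤ d ∧ d ≤ n - 2) := by
  have hg : gap n S ∉ S := gap_not_mem n S hS
  set g := gap n S with hgdef
  set t₀ := (k - g - 1).val with ht₀def
  have hcast : ((t₀ : ℕ) : Fin n) = k - g - 1 := Fin.cast_val_eq_self _
  have hkeq : g + 1 + ((t₀ : ℕ) : Fin n) = k := by rw [hcast]; ring
  have ht₀lt : t₀ < n - 1 := by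
    by_contra hcon
    have h1 : t₀ < n := (k - g - 1).isLt
    have h2 : t₀ = n - 1 := by omega
    have h3 : ((t₀ : ℕ) : Fin n) + 1 = 0 := by
      have : ((t₀ : ℕ) : Fin n) + 1 = ((t₀ + 1 : ℕ) : Fin n) := by push_cast; ring
      rw [this, h2, Nat.sub_add_cancel (by omega), Fin.natCast_self]
    have hkg : k = g := by
      rw [← hkeq, add_assoc, add_comm (1 : Fin n), h3, add_zero]
    exact hg (hkg ▸ hk)
  refine ⟨(((List.range t₀).map (fun t : ℕ => g + 1 + (t : Fin n))).filter
      (fun x => decide (x ∈ S))),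
    (((List.range (n - 2 - t₀)).filter
      (fun s => decide ((k + ((s + 1 : ℕ) : Fin n)) ∈ S))).map (· + 1)), ?_, ?_, ?_⟩
  · have hsplit : n - 1 = (t₀ + 1) + (n - 2 - t₀) := by omega
    have hmid : (([t₀] : List ℕ).map (fun t : ℕ => g + 1 + (t : Fin n))).filter
        (fun x => decide (x ∈ S)) = [k] := by
      simp only [List.map_cons, List.map_nil, hkeq]
      simp [List.filter, hk]
    have hthird : (((List.range (n - 2 - t₀)).map (fun x => t₀ + 1 + x)).map
          (fun t : ℕ => g + 1 + (t : Fin n)))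
        = (List.range (n - 2 - t₀)).map (fun s => k + ((s + 1 : ℕ) : Fin n)) := by
      rw [List.map_map]
      apply List.map_congr_left
      intro s _
      simp only [Function.comp]
      rw [← hkeq]
      push_cast
      ring
    rw [incWord_eq, ← hgdef, hsplit, List.range_add, List.map_append, List.filter_append,
      List.range_succ, List.map_append, List.filter_append, List.append_assoc, hmid,
      hthird]
    congr 1
    rw [List.singleton_append]
    congr 1
    rw [List.filter_map, List.map_map]
    simp only [Function.comp_def]
  · rw [List.pairwise_map]
    exact ((List.pairwise_lt_range).filter _).imp_of_mem
      (fun {x y} _ _ hxy => by omega)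
  · intro d hd
    obtain ⟨s, hs, rfl⟩ := List.mem_map.mp hd
    have := List.mem_range.mp (List.mem_of_mem_filter hs)
    omega

lemma dec_split (T : Finset (Fin n)) (hT : Tᶜ.Nonempty) (k : Fin n) (hk : k ∈ T) :
    ∃ (vs : List ℕ) (B : List (Fin n)),
      decWord n T = ((vs.map (fun d : ℕ => k + (d : Fin n))).reverse) ++ k :: B ∧
      vs.Pairwise (· < ·) ∧ (∀ d ∈ vs, 1 ≤ d ∧ d ≤ n - 2) := by
  have hg : gap n T ∉ T := gap_not_mem n T hT
  set g := gap n T with hgdef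
  set s₀ := (g - 1 - k).val with hs₀def
  have hcast : ((s₀ : ℕ) : Fin n) = g - 1 - k := Fin.cast_val_eq_self _
  have hkeq : g - 1 - ((s₀ : ℕ) : Fin n) = k := by rw [hcast]; ring
  have hs₀lt : s₀ < n - 1 := by
    by_contra hcon
    have h1 : s₀ < n := (g - 1 - k).isLt
    have h2 : s₀ = n - 1 := by omega
    have h3 : ((s₀ : ℕ) : Fin n) + 1 = 0 := by
      have : ((s₀ : ℕ) : Fin n) + 1 = ((s₀ + 1 : ℕ) : Fin n) := by push_cast; ring
      rw [this, h2, Nat.sub_add_cancel (by omega), Fin.natCast_self]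
    have hkg : k = g := by
      have h4 : ((s₀ : ℕ) : Fin n) = -1 := eq_neg_of_add_eq_zero_left h3
      rw [← hkeq, h4]; ring
    exact hg (hkg ▸ hk)
  refine ⟨(((List.range s₀).filter
      (fun s => decide ((k + ((s + 1 : ℕ) : Fin n)) ∈ T))).map (· + 1)),
    (((List.range (n - 2 - s₀)).map (fun x => g - 1 - ((s₀ + 1 + x : ℕ) : Fin n))).filter
      (fun x => decide (x ∈ T))), ?_, ?_, ?_⟩
  · have hsplit : n - 1 = (s₀ + 1) + (n - 2 - s₀) := by omega
    have hfirst : ((List.range s₀).map (fun t : ℕ => g - 1 - (t : Fin n)))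
        = ((List.range s₀).map (fun s => k + ((s + 1 : ℕ) : Fin n))).reverse := by
      rw [map_range_reverse]
      apply List.map_congr_left
      intro i hi
      have hilt : i < s₀ := List.mem_range.mp hi
      have harith : s₀ - 1 - i + 1 = s₀ - i := by omega
      rw [harith]
      have hc : ((s₀ - i : ℕ) : Fin n) = ((s₀ : ℕ) : Fin n) - ((i : ℕ) : Fin n) := by
        have h5 : (s₀ - i) + i = s₀ := by omega
        have h6 := congrArg (
          fun x : ℕ => (x : Fin n)) h5
        push_cast at h6
        linear_combination h6
      rw [hc, ← hkeq]
      ring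
    have hmid : (([s₀] : List ℕ).map (fun t : ℕ => g - 1 - (t : Fin n))).filter
        (fun x => decide (x ∈ T)) = [k] := by
      simp only [List.map_cons, List.map_nil, hkeq]
      simp [List.filter, hk]
    have hthird : (((List.range (n - 2 - s₀)).map (fun x => s₀ + 1 + x)).map
          (fun t : ℕ => g - 1 - (t : Fin n)))
        = (List.range (n - 2 - s₀)).map (fun x => g - 1 - ((s₀ + 1 + x : ℕ) : Fin n)) := by
      rw [List.map_map]
      apply List.map_congr_left
      intro s _
      rfl
    have h7 : ((List.range s₀).map (fun s => k + ((s + 1 : ℕ) : Fin n))).filter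
          (fun x => decide (x ∈ T))
        = (((List.range s₀).filter
            (fun s => decide ((k + ((s + 1 : ℕ) : Fin n)) ∈ T))).map (· + 1)).map
              (fun d : ℕ => k + (d : Fin n)) := by
      rw [List.filter_map, List.map_map]
      simp only [Function.comp_def]
    rw [decWord_eq, ← hgdef, hsplit, List.range_add, List.map_append, List.filter_append,
      List.range_succ, List.map_append, List.filter_append, List.append_assoc, hmid,
      hthird, hfirst, List.filter_reverse, h7, List.singleton_append]
  · rw [List.pairwise_map]
    exact ((List.pairwise_lt_range).filter _).imp_of_mem
      (fun {x y} _ _ hxy => by omega)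
  · intro d hd
    obtain ⟨s, hs, rfl⟩ := List.mem_map.mp hd
    have := List.mem_range.mp (List.mem_of_mem_filter hs)
    omega

theorem stmt10' (i j : ℕ)
    (hi1 : 1 ≤ i) (hi2 : i ≤ n - 1) (hj1 : 1 ≤ j) (hj2 : j ≤ n - 1)
    (hij : n < i + j) :
    (∑ S ∈ Finset.powersetCard i (Finset.univ : Finset (Fin n)),
      ((incWord n S).map (a n)).prod) *
    (∑ T ∈ Finset.powersetCard j (Finset.univ : Finset (Fin n)),
      ((decWord n T).map (a n)).prod) = 0 := by
  rw [Finset.sum_mul_sum]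
  apply Finset.sum_eq_zero
  intro S hSmem
  apply Finset.sum_eq_zero
  intro T hTmem
  have hScard : S.card = i := Finset.mem_powersetCard_univ.mp hSmem
  have hTcard : T.card = j := Finset.mem_powersetCard_univ.mp hTmem
  have hcardFin : Fintype.card (Fin n) = n := Fintype.card_fin n
  have hSc : Sᶜ.Nonempty := by
    rw [← Finset.card_pos, Finset.card_compl, hcardFin]
    omega
  have hTc : Tᶜ.Nonempty := by
    rw [← Finset.card_pos, Finset.card_compl, hcardFin]
    omega
  have hint : (S ∩ T).Nonempty := by
    rw [← Finset.card_pos]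
    have h1 := Finset.card_inter_add_card_union S T
    have h2 : (S ∪ T).card ≤ n := by
      have h3 := Finset.card_le_univ (S ∪ T)
      omega
    omega
  obtain ⟨k, hkmem⟩ := hint
  have hkS : k ∈ S := (Finset.mem_inter.mp hkmem).1
  have hkT : k ∈ T := (Finset.mem_inter.mp hkmem).2
  obtain ⟨A, us, hinc, hus_sorted, hus_b⟩ := inc_split n S hSc k hkS
  obtain ⟨vs, B, hdec, hvs_sorted, hvs_b⟩ := dec_split n T hTc k hkT
  rw [hinc, hdec, List.map_append, List.prod_append, List.map_cons, List.prod_cons,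
    List.map_append, List.prod_append, List.map_cons, List.prod_cons]
  have hU : ((us.map (fun d : ℕ => k + (d : Fin n))).map (a n))
      = us.map (fun d : ℕ => a n (k + (d : Fin n))) := by
    rw [List.map_map]; rfl
  have hV : (((vs.map (fun d : ℕ => k + (d : Fin n))).reverse).map (a n))
      = (vs.map (fun d : ℕ => a n (k + (d : Fin n)))).reverse := by
    rw [← List.map_reverse, ← List.map_reverse, List.map_map]; rfl
  rw [hU, hV]
  set Ap := (A.map (a n)).prod with hAp
  set Bp := (B.map (a n)).prod with hBp
  set U := (us.map (fun d : ℕ => a n (k + (d : Fin n)))).prod with hUp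
  set V := ((vs.map (fun d : ℕ => a n (k + (d : Fin n)))).reverse).prod with hVp
  have h0 : (a n k * U) * (V * a n k) = 0 :=
    key n (us.length + vs.length) k us vs le_rfl hus_sorted hvs_sorted hus_b hvs_b
  calc (Ap * (a n k * U)) * (V * (a n k * Bp))
      = Ap * (((a n k * U) * (V * a n k)) * Bp) := by simp only [mul_assoc]
    _ = 0 := by rw [h0, zero_mul, mul_zero]


end Aux

/-- in the affine nilTemperley-Lieb algebra on `n` generators,
`ẽᵢⁿ · h̃ⱼⁿ = 0` whenever `i + j > n`. -/
theorem stmt10 (n : ℕ) [NeZero n] (i j : ℕ)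
    (hi1 : 1 ≤ i) (hi2 : i ≤ n - 1) (hj1 : 1 ≤ j) (hj2 : j ≤ n - 1)
    (hij : n < i + j) :
    ee n i * hh n j = 0 := by
  unfold ee hh
  exact stmt10' n i j hi1 hi2 hj1 hj2 hij

end NilTL
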